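/- arXiv:2008.08632 — 8 statements merged into one kernel-verified Lean document; each statement's English description precedes it below -/
import Mathlib

section
/- Let n ≥ 1 and let z₁,…,zₙ be real numbers, all ≠ 1, with at least one zᵢ equal to −1. Set aᵢ = a(zᵢ) = 1 + 2zᵢ/(zᵢ−1)², let σₖ be the k-th elementary symmetric polynomial of a₁,…,aₙ (σ₀ = 1), and let ρₖ = σₖ / C(n,k). If for every k with 0 ≤ k ≤ ⌊n/2⌋ the 2k-th finite difference Δ^{2k}ρ_{n−2k} = Σ_{j=n−2k}^{n} C(2k, n−j)(−1)^{n−j} ρⱼ is nonnegative, then T(φ) ≤ 1 for every real φ. -/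
/-- `ψ_{z₀}(z) = |z - z₀|² / |1 - z₀|²`. -/
noncomputable def psi (z₀ z : ℂ) : ℝ :=
  ‖z - z₀‖ ^ 2 / ‖1 - z₀‖ ^ 2

/-- `T(φ) = ∏ᵢ ψ_{zᵢ}(e^{iφ}) + ∏ᵢ ψ_{zᵢ}(-e^{iφ})` for real roots `zᵢ`. -/
noncomputable def T {n : ℕ} (z : Fin n → ℝ) (φ : ℝ) : ℝ :=
  (∏ i, psi (z i) (Complex.exp (φ * Complex.I))) +
    (∏ i, psi (z i) (-Complex.exp (φ * Complex.I)))

open Finset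

lemma psi_exp (r : ℝ) (hr : r ≠ 1) (φ : ℝ) :
    psi r (Complex.exp (φ * Complex.I)) =
      (1 + 2 * r / (r - 1) ^ 2) - (2 * r / (r - 1) ^ 2) * Real.cos φ := by
  have h1 : (r : ℝ) - 1 ≠ 0 := sub_ne_zero.mpr hr
  unfold psi
  rw [Complex.sq_norm, Complex.sq_norm]
  have h2 : Complex.normSq (Complex.exp (↑φ * Complex.I) - ↑r)
      = (Real.cos φ - r) ^ 2 + (Real.sin φ) ^ 2 := by
    rw [Complex.exp_mul_I, ← Complex.ofReal_cos, ← Complex.ofReal_sin]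
    simp [Complex.normSq_apply, Complex.cos_ofReal_re, Complex.sin_ofReal_re]
    ring
  have h3 : Complex.normSq (1 - (r : ℂ)) = (r - 1) ^ 2 := by
    have : (1 : ℂ) - (r : ℂ) = ((1 - r : ℝ) : ℂ) := by push_cast; ring
    rw [this, Complex.normSq_ofReal]; ring
  rw [h2, h3]
  have hs : Real.sin φ ^ 2 = 1 - Real.cos φ ^ 2 := by
    have := Real.sin_sq_add_cos_sq φ; nlinarith
  field_simp
  nlinarith [hs]

lemma psi_neg_exp (r : ℝ) (hr : r ≠ 1) (φ : ℝ) :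
    psi r (-Complex.exp (φ * Complex.I)) =
      (1 + 2 * r / (r - 1) ^ 2) + (2 * r / (r - 1) ^ 2) * Real.cos φ := by
  have h1 : (r : ℝ) - 1 ≠ 0 := sub_ne_zero.mpr hr
  unfold psi
  rw [Complex.sq_norm, Complex.sq_norm]
  have h2 : Complex.normSq (-Complex.exp (↑φ * Complex.I) - ↑r)
      = (Real.cos φ + r) ^ 2 + (Real.sin φ) ^ 2 := by
    rw [Complex.exp_mul_I, ← Complex.ofReal_cos, ← Complex.ofReal_sin]
    simp [Complex.normSq_apply, Complex.cos_ofReal_re, Complex.sin_ofReal_re]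
    ring
  have h3 : Complex.normSq (1 - (r : ℂ)) = (r - 1) ^ 2 := by
    have : (1 : ℂ) - (r : ℂ) = ((1 - r : ℝ) : ℂ) := by push_cast; ring
    rw [this, Complex.normSq_ofReal]; ring
  rw [h2, h3]
  have hs : Real.sin φ ^ 2 = 1 - Real.cos φ ^ 2 := by
    have := Real.sin_sq_add_cos_sq φ; nlinarith
  field_simp
  nlinarith [hs]


lemma prod_expand (n : ℕ) (a : Fin n → ℝ) (x y : ℝ) (hxy : y = 1 - x) :
    ∏ i, (a i * x + y) =
      ∑ k ∈ range (n + 1),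
        (∑ S ∈ powersetCard k (univ : Finset (Fin n)), ∏ i ∈ S, a i) * (x ^ k * y ^ (n - k)) := by
  subst hxy
  rw [Finset.prod_add]
  rw [Finset.sum_powerset]
  rw [Finset.card_univ, Fintype.card_fin]
  refine Finset.sum_congr rfl fun k hk => ?_
  rw [Finset.sum_mul]
  refine Finset.sum_congr rfl fun S hS => ?_
  have hcard : S.card = k := (Finset.mem_powersetCard.mp hS).2
  rw [Finset.prod_mul_distrib, Finset.prod_const, Finset.prod_const,
    Finset.card_sdiff_of_subset (Finset.subset_univ S), Finset.card_univ, Fintype.card_fin, hcard]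
  ring

lemma key_sum (n j m : ℕ) (hjm : j + m = n) (c : ℝ) :
    ∑ k ∈ range (n + 1), 2 * ((n.choose (2 * k) * ((2 * k).choose m) : ℕ) : ℝ) * c ^ (2 * k)
      = ∑ i ∈ range (j + 1),
          (n.choose j : ℝ) * (j.choose i : ℝ) * ((1 : ℝ) + (-1 : ℝ) ^ (m + i)) * c ^ (m + i) := by
  have hjn : j ≤ n := by omega
  have hm : m = n - j := by omega
  rw [← Finset.sum_filter_of_ne (p := fun k => m ≤ 2 * k ∧ 2 * k ≤ n)
      (by
        intro k hk hne
        constructor <;> by_contra h <;> push_neg at h <;> apply hne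
        · rw [Nat.choose_eq_zero_of_lt h]; simp
        · rw [Nat.choose_eq_zero_of_lt h]; simp)]
  conv_rhs => rw [← Finset.sum_filter_of_ne (p := fun i => (m + i) % 2 = 0)
      (by
        intro i hi hne
        by_contra h
        apply hne
        have hodd : Odd (m + i) := Nat.odd_iff.mpr (by omega)
        rw [hodd.neg_one_pow]
        ring)]
  refine Finset.sum_nbij' (fun k => 2 * k - m) (fun i => (m + i) / 2) ?_ ?_ ?_ ?_ ?_ <;>
    try dsimp only
  · intro k hk
    simp only [mem_filter, mem_range] at hk ⊢
    omega
  · intro i hi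
    simp only [mem_filter, mem_range] at hi ⊢
    omega
  · intro k hk
    simp only [mem_filter, mem_range] at hk
    omega
  · intro i hi
    simp only [mem_filter, mem_range] at hi
    omega
  · intro k hk
    simp only [mem_filter, mem_range] at hk
    obtain ⟨hk1, hk2, hk3⟩ := hk
    have hme : m + (2 * k - m) = 2 * k := by omega
    rw [hme]
    have hch : n.choose (2 * k) * (2 * k).choose m = n.choose j * j.choose (2 * k - m) := by
      rw [Nat.choose_mul hk2]
      congr 1
      · rw [hm, Nat.choose_symm hjn]
      · congr 1; omega
    rw [hch]
    have hev : (-1 : ℝ) ^ (2 * k) = 1 := by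
      rw [pow_mul]; norm_num
    rw [hev]
    push_cast
    ring

lemma bracket_eq (n j m : ℕ) (hjm : j + m = n) (c : ℝ) :
    (n.choose j : ℝ) * ((1 - c) ^ j * c ^ m + (1 + c) ^ j * (-c) ^ m)
      = (-1 : ℝ) ^ m *
          ∑ k ∈ range (n + 1), 2 * ((n.choose (2 * k) * ((2 * k).choose m) : ℕ) : ℝ) * c ^ (2 * k) := by
  rw [key_sum n j m hjm c]
  have e1 : (1 - c) ^ j = ∑ i ∈ range (j + 1), (j.choose i : ℝ) * ((-1) ^ i * c ^ i) := by
    have h : (1 : ℝ) - c = (-c) + 1 := by ring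
    rw [h, add_pow]
    refine Finset.sum_congr rfl fun i _ => ?_
    rw [neg_pow]
    ring
  have e2 : (1 + c) ^ j = ∑ i ∈ range (j + 1), (j.choose i : ℝ) * c ^ i := by
    rw [add_comm, add_pow]
    refine Finset.sum_congr rfl fun i _ => ?_
    ring
  rw [e1, e2, Finset.sum_mul, Finset.sum_mul, ← Finset.sum_add_distrib, Finset.mul_sum,
    Finset.mul_sum]
  refine Finset.sum_congr rfl fun i _ => ?_
  rw [pow_add c m i, pow_add (-1 : ℝ) m i, neg_pow c m]
  rcases Nat.even_or_odd m with hm' | hm'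
  · rw [hm'.neg_one_pow]; ring
  · rw [hm'.neg_one_pow]; ring

lemma main_identity (n : ℕ) (a : Fin n → ℝ) (c : ℝ) :
    (∏ i, (a i * (1 - c) + c)) + (∏ i, (a i * (1 + c) + -c))
      = ∑ k ∈ range (n + 1), 2 * (n.choose (2 * k) : ℝ) * c ^ (2 * k) *
          ∑ j ∈ range (n + 1), ((2 * k).choose (n - j) : ℝ) * (-1 : ℝ) ^ (n - j) *
            ((∑ S ∈ powersetCard j (univ : Finset (Fin n)), ∏ i ∈ S, a i) / (n.choose j : ℝ)) := by
  have P := prod_expand n a (1 - c) c (by ring)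
  have Q := prod_expand n a (1 + c) (-c) (by ring)
  rw [P, Q, ← Finset.sum_add_distrib]
  have step1 : ∀ j ∈ range (n + 1),
      (∑ S ∈ powersetCard j (univ : Finset (Fin n)), ∏ i ∈ S, a i) * ((1 - c) ^ j * c ^ (n - j)) +
        (∑ S ∈ powersetCard j (univ : Finset (Fin n)), ∏ i ∈ S, a i) * ((1 + c) ^ j * (-c) ^ (n - j))
      = ∑ k ∈ range (n + 1),
          ((∑ S ∈ powersetCard j (univ : Finset (Fin n)), ∏ i ∈ S, a i) / (n.choose j : ℝ)) *
            (-1 : ℝ) ^ (n - j) *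
            (2 * ((n.choose (2 * k) * ((2 * k).choose (n - j)) : ℕ) : ℝ) * c ^ (2 * k)) := by
    intro j hj
    have hjn : j ≤ n := by
      have := mem_range.mp hj; omega
    have hC : (0 : ℝ) < (n.choose j : ℝ) := by exact_mod_cast Nat.choose_pos hjn
    have hb := bracket_eq n j (n - j) (by omega) c
    have hu : (-1 : ℝ) ^ (n - j) * (-1 : ℝ) ^ (n - j) = 1 := by
      rw [← pow_add]; exact Even.neg_one_pow ⟨n - j, rfl⟩
    have hS : (∑ k ∈ range (n + 1),
          2 * ((n.choose (2 * k) * ((2 * k).choose (n - j)) : ℕ) : ℝ) * c ^ (2 * k))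
        = (-1 : ℝ) ^ (n - j) *
            ((n.choose j : ℝ) * ((1 - c) ^ j * c ^ (n - j) + (1 + c) ^ j * (-c) ^ (n - j))) := by
      rw [hb, ← mul_assoc, hu, one_mul]
    conv_rhs => rw [← Finset.mul_sum]
    rw [hS]
    rcases Nat.even_or_odd (n - j) with hp | hp <;> rw [hp.neg_one_pow] <;> field_simp <;> ring
  rw [Finset.sum_congr rfl step1, Finset.sum_comm]
  refine Finset.sum_congr rfl fun k _ => ?_
  rw [Finset.mul_sum]
  refine Finset.sum_congr rfl fun j _ => ?_
  push_cast
  ring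

theorem stmt_0 (n : ℕ) (hn : 1 ≤ n) (z : Fin n → ℝ)
    (hz : ∀ i, z i ≠ 1) (hroot : ∃ i, z i = -1)
    (a : Fin n → ℝ) (ha : ∀ i, a i = 1 + 2 * z i / (z i - 1) ^ 2)
    (σ : ℕ → ℝ)
    (hσ : ∀ k, σ k = ∑ S ∈ Finset.powersetCard k (Finset.univ : Finset (Fin n)),
      ∏ i ∈ S, a i)
    (ρ : ℕ → ℝ) (hρ : ∀ k, ρ k = σ k / (n.choose k : ℝ))
    (hΔ : ∀ k ≤ n / 2,
      0 ≤ ∑ j ∈ Finset.Icc (n - 2 * k) n,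
        ((2 * k).choose (n - j) : ℝ) * (-1 : ℝ) ^ (n - j) * ρ j) :
    ∀ φ : ℝ, T z φ ≤ 1 := by
  intro φ
  obtain ⟨i₀, hi₀⟩ := hroot
  have h1 : ∀ i : Fin n, psi (z i) (Complex.exp (φ * Complex.I))
      = a i * (1 - Real.cos φ) + Real.cos φ := by
    intro i
    rw [psi_exp (z i) (hz i) φ, ha i]
    ring
  have h2 : ∀ i : Fin n, psi (z i) (-Complex.exp (φ * Complex.I))
      = a i * (1 + Real.cos φ) + -Real.cos φ := by
    intro i
    rw [psi_neg_exp (z i) (hz i) φ, ha i]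
    ring
  have hT : T z φ = (∏ i, (a i * (1 - Real.cos φ) + Real.cos φ)) +
      (∏ i, (a i * (1 + Real.cos φ) + -Real.cos φ)) := by
    unfold T
    rw [Finset.prod_congr rfl fun i _ => h1 i, Finset.prod_congr rfl fun i _ => h2 i]
  have hinner : ∀ k : ℕ,
      (∑ j ∈ Finset.range (n + 1), ((2 * k).choose (n - j) : ℝ) * (-1 : ℝ) ^ (n - j) *
        ((∑ S ∈ Finset.powersetCard j (Finset.univ : Finset (Fin n)), ∏ i ∈ S, a i) /
          (n.choose j : ℝ)))
      = ∑ j ∈ Finset.Icc (n - 2 * k) n,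
          ((2 * k).choose (n - j) : ℝ) * (-1 : ℝ) ^ (n - j) * ρ j := by
    intro k
    have hsub : Finset.Icc (n - 2 * k) n ⊆ Finset.range (n + 1) := by
      intro j hj
      simp only [Finset.mem_Icc] at hj
      simp only [Finset.mem_range]
      omega
    have hzero : ∀ j ∈ Finset.range (n + 1), j ∉ Finset.Icc (n - 2 * k) n →
        ((2 * k).choose (n - j) : ℝ) * (-1 : ℝ) ^ (n - j) *
          ((∑ S ∈ Finset.powersetCard j (Finset.univ : Finset (Fin n)), ∏ i ∈ S, a i) /
            (n.choose j : ℝ)) = 0 := by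
      intro j hjr hji
      simp only [Finset.mem_range] at hjr
      simp only [Finset.mem_Icc] at hji
      have hlt : 2 * k < n - j := by omega
      rw [Nat.choose_eq_zero_of_lt hlt]
      simp
    rw [← Finset.sum_subset hsub hzero]
    refine Finset.sum_congr rfl fun j _ => ?_
    rw [hρ j, hσ j]
  have hid : ∀ x : ℝ, (∏ i, (a i * (1 - x) + x)) + (∏ i, (a i * (1 + x) + -x))
      = ∑ k ∈ Finset.range (n + 1), 2 * (n.choose (2 * k) : ℝ) * x ^ (2 * k) *
          (∑ j ∈ Finset.Icc (n - 2 * k) n,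
            ((2 * k).choose (n - j) : ℝ) * (-1 : ℝ) ^ (n - j) * ρ j) := by
    intro x
    rw [main_identity n a x]
    exact Finset.sum_congr rfl fun k _ => by rw [hinner k]
  have h10 : (∏ i, (a i * (1 - (1 : ℝ)) + 1)) = 1 :=
    Finset.prod_eq_one fun i _ => by ring
  have h11 : (∏ i, (a i * (1 + (1 : ℝ)) + -1)) = 0 :=
    Finset.prod_eq_zero (Finset.mem_univ i₀) (by rw [ha i₀, hi₀]; norm_num)
  have hSone : ∑ k ∈ Finset.range (n + 1), 2 * (n.choose (2 * k) : ℝ) * (1 : ℝ) ^ (2 * k) *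
      (∑ j ∈ Finset.Icc (n - 2 * k) n,
        ((2 * k).choose (n - j) : ℝ) * (-1 : ℝ) ^ (n - j) * ρ j) = 1 := by
    have h := hid 1
    rw [h10, h11] at h
    linarith
  have hle : T z φ ≤ ∑ k ∈ Finset.range (n + 1), 2 * (n.choose (2 * k) : ℝ) * (1 : ℝ) ^ (2 * k) *
      (∑ j ∈ Finset.Icc (n - 2 * k) n,
        ((2 * k).choose (n - j) : ℝ) * (-1 : ℝ) ^ (n - j) * ρ j) := by
    rw [hT, hid (Real.cos φ)]
    refine Finset.sum_le_sum fun k hk => ?_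
    by_cases h2k : 2 * k ≤ n
    · have hk2 : k ≤ n / 2 := by omega
      have hD := hΔ k hk2
      have hc2 : (Real.cos φ) ^ (2 * k) ≤ 1 := by
        rw [pow_mul]
        exact pow_le_one₀ (sq_nonneg _) (Real.cos_sq_le_one φ)
      have hc0 : (0 : ℝ) ≤ (Real.cos φ) ^ (2 * k) := by
        rw [pow_mul]
        positivity
      have hcn : (0 : ℝ) ≤ (n.choose (2 * k) : ℝ) := Nat.cast_nonneg _
      rw [one_pow]
      have hfac : 2 * (n.choose (2 * k) : ℝ) * Real.cos φ ^ (2 * k)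
          ≤ 2 * (n.choose (2 * k) : ℝ) := by nlinarith [mul_nonneg hcn (sub_nonneg.mpr hc2)]
      calc 2 * (n.choose (2 * k) : ℝ) * Real.cos φ ^ (2 * k) *
            (∑ j ∈ Finset.Icc (n - 2 * k) n,
              ((2 * k).choose (n - j) : ℝ) * (-1 : ℝ) ^ (n - j) * ρ j)
          ≤ 2 * (n.choose (2 * k) : ℝ) *
            (∑ j ∈ Finset.Icc (n - 2 * k) n,
              ((2 * k).choose (n - j) : ℝ) * (-1 : ℝ) ^ (n - j) * ρ j) :=
            mul_le_mul_of_nonneg_right hfac hD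
        _ = _ := by ring
    · rw [Nat.choose_eq_zero_of_lt (by omega)]
      norm_num
  calc T z φ ≤ _ := hle
    _ = 1 := hSone
end

section
/- Let n ≥ 1 and let z₁,…,zₙ be real numbers, all ≠ 1, with at least one zᵢ equal to −1, and let P(z) = ∏_{i=1}^n (z − zᵢ)/(1 − zᵢ) (so P(1) = 1). Set aᵢ = 1 + 2zᵢ/(zᵢ−1)², let σₖ be the k-th elementary symmetric polynomial of a₁,…,aₙ (σ₀ = 1), and ρₖ = σₖ / C(n,k). If Σ_{j=n−2k}^{n} C(2k, n−j)(−1)^{n−j} ρⱼ ≥ 0 for every k with 0 ≤ k ≤ ⌊n/2⌋, then |P(z)|² + |P(−z)|² ≤ 1 for every complex z with |z| = 1. -/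
open Finset


lemma aux_choose_id (n u j : ℕ) (hu : u ≤ n) (hj : 2*j ≤ n) :
    n.choose (2*j) * (2*j).choose (n-u) = n.choose u * u.choose (n-2*j) := by
  by_cases h : n ≤ u + 2*j
  · have h1 : n - u ≤ 2*j := by omega
    rw [Nat.choose_mul h1, Nat.choose_symm hu, Nat.sub_sub_self hu]
    congr 1
    have : 2*j - (n-u) = u - (n - 2*j) := by omega
    rw [this, Nat.choose_symm (by omega)]
  · rw [Nat.choose_eq_zero_of_lt (show 2*j < n-u by omega),
      Nat.choose_eq_zero_of_lt (show u < n-2*j by omega)]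
    simp

lemma aux_even_filter (n : ℕ) (f : ℕ → ℝ) :
    ∑ s ∈ Finset.range (n+1), (1 + (-1:ℝ)^s) * f s
      = ∑ j ∈ Finset.range (n/2+1), 2 * f (2*j) := by
  have himg : (Finset.range (n/2+1)).image (fun j => 2*j) ⊆ Finset.range (n+1) := by
    intro s hs
    simp only [Finset.mem_image, Finset.mem_range] at hs ⊢
    omega
  rw [show (∑ j ∈ Finset.range (n/2+1), 2 * f (2*j))
      = ∑ s ∈ (Finset.range (n/2+1)).image (fun j => 2*j), (1 + (-1:ℝ)^s) * f s by
    rw [Finset.sum_image (by intro a _ b _ h; have h' : 2*a = 2*b := h; omega)]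
    refine Finset.sum_congr rfl fun j _ => ?_
    rw [pow_mul]
    norm_num]
  refine (Finset.sum_subset himg fun s hs hns => ?_).symm
  have hodd : Odd s := by
    rcases Nat.even_or_odd s with he | ho
    · exfalso; apply hns
      simp only [Finset.mem_image, Finset.mem_range] at hs ⊢
      obtain ⟨t, ht⟩ := he
      exact ⟨t, by omega, by omega⟩
    · exact ho
  rw [hodd.neg_one_pow]
  ring


-- sum over subsets depending only on card
lemma aux_sum_powerset_card {ι : Type*} [DecidableEq ι] (W : Finset ι) (h : ℕ → ℝ) :
    ∑ V ∈ W.powerset, h V.card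
      = ∑ v ∈ Finset.range (W.card+1), (W.card.choose v : ℝ) * h v := by
  erw [Finset.powerset_card_disjiUnion, Finset.sum_disjiUnion]
  refine Finset.sum_congr rfl fun v _ => ?_
  rw [Finset.sum_congr rfl (fun V hV => by
    rw [(Finset.mem_powersetCard.mp hV).2]),
    Finset.sum_const, Finset.card_powersetCard, nsmul_eq_mul]

-- reindexing pairs (S, T ⊆ S) ↦ (W = T ∪ Sᶜ, V = Sᶜ)
lemma aux_reindex (n : ℕ) (F : Finset (Fin n) → Finset (Fin n) → ℝ) :
    ∑ S ∈ (Finset.univ : Finset (Fin n)).powerset, ∑ T ∈ S.powerset, F S T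
      = ∑ W ∈ (Finset.univ : Finset (Fin n)).powerset, ∑ V ∈ W.powerset,
          F Vᶜ (W \ V) := by
  rw [Finset.sum_sigma', Finset.sum_sigma']
  refine Finset.sum_nbij' (i := fun p => ⟨p.2 ∪ p.1ᶜ, p.1ᶜ⟩)
    (j := fun p => ⟨p.2ᶜ, p.1 \ p.2⟩) ?_ ?_ ?_ ?_ ?_
  · rintro ⟨S, T⟩ hp
    simp only [Finset.mem_sigma, Finset.mem_powerset] at hp ⊢
    exact ⟨Finset.subset_univ _, Finset.subset_union_right⟩
  · rintro ⟨W, V⟩ hp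
    simp only [Finset.mem_sigma, Finset.mem_powerset] at hp ⊢
    refine ⟨Finset.subset_univ _, ?_⟩
    intro x hx
    simp only [Finset.mem_sdiff, Finset.mem_compl] at hx ⊢
    exact hx.2
  · rintro ⟨S, T⟩ hp
    simp only [Finset.mem_sigma, Finset.mem_powerset] at hp
    have hT := hp.2
    have hd : Disjoint T Sᶜ := disjoint_compl_right_iff.mpr hT
    simp only [Sigma.mk.inj_iff, compl_compl]
    exact ⟨trivial, by rw [heq_eq_eq, Finset.union_sdiff_cancel_right hd]⟩
  · rintro ⟨W, V⟩ hp
    simp only [Finset.mem_sigma, Finset.mem_powerset] at hp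
    have hV := hp.2
    simp only [Sigma.mk.inj_iff]
    exact ⟨by rw [compl_compl, Finset.sdiff_union_of_subset hV],
      by rw [heq_eq_eq, compl_compl]⟩
  · rintro ⟨S, T⟩ hp
    simp only [Finset.mem_sigma, Finset.mem_powerset] at hp
    have hT := hp.2
    have hd : Disjoint T Sᶜ := disjoint_compl_right_iff.mpr hT
    show F S T = F Sᶜᶜ ((T ∪ Sᶜ) \ Sᶜ)
    rw [compl_compl, Finset.union_sdiff_cancel_right hd]

lemma aux_lhs (n : ℕ) (a : Fin n → ℝ) (x : ℝ) :
    (∏ i, (a i - (a i - 1) * x)) + ∏ i, (a i + (a i - 1) * x)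
      = ∑ u ∈ Finset.range (n+1),
          (-1:ℝ)^(n-u) * (∑ S ∈ Finset.powersetCard u Finset.univ, ∏ t ∈ S, a t)
          * ∑ j ∈ Finset.range (n/2+1), 2 * ((u.choose (n-2*j) : ℝ) * x^(2*j)) := by
  have hprodx : ∀ S : Finset (Fin n), (∏ i ∈ S, ((a i - 1) * x))
      = (∏ i ∈ S, (a i - 1)) * x^S.card := by
    intro S; rw [Finset.prod_mul_distrib, Finset.prod_const]
  have e1 : (∏ i, (a i - (a i - 1) * x))
      = ∑ S ∈ (univ : Finset (Fin n)).powerset,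
          ((-1:ℝ)^S.card * ((∏ i ∈ S, (a i - 1)) * x^S.card)) * ∏ i ∈ univ \ S, a i := by
    rw [show (∏ i, (a i - (a i - 1) * x)) = ∏ i, ((-((a i - 1) * x)) + a i) from
      Finset.prod_congr rfl fun i _ => by ring, Finset.prod_add]
    refine Finset.sum_congr rfl fun S _ => ?_
    congr 1
    rw [show (∏ i ∈ S, -((a i - 1) * x)) = ∏ i ∈ S, ((-1) * ((a i - 1) * x)) from
      Finset.prod_congr rfl fun i _ => by ring, Finset.prod_mul_distrib,
      Finset.prod_const, hprodx]
  have e2 : (∏ i, (a i + (a i - 1) * x))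
      = ∑ S ∈ (univ : Finset (Fin n)).powerset,
          ((∏ i ∈ S, (a i - 1)) * x^S.card) * ∏ i ∈ univ \ S, a i := by
    rw [show (∏ i, (a i + (a i - 1) * x)) = ∏ i, (((a i - 1) * x) + a i) from
      Finset.prod_congr rfl fun i _ => by ring, Finset.prod_add]
    refine Finset.sum_congr rfl fun S _ => ?_
    rw [hprodx]
  have e3 : ∀ S : Finset (Fin n), (∏ i ∈ S, (a i - 1))
      = ∑ T ∈ S.powerset, (∏ i ∈ T, a i) * (-1:ℝ)^(S.card - T.card) := by
    intro S
    rw [show (∏ i ∈ S, (a i - 1)) = ∏ i ∈ S, (a i + (-1)) from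
      Finset.prod_congr rfl fun i _ => by ring, Finset.prod_add]
    refine Finset.sum_congr rfl fun T hT => ?_
    rw [Finset.prod_const, Finset.card_sdiff_of_subset (Finset.mem_powerset.mp hT)]
  rw [e1, e2, ← Finset.sum_add_distrib]
  have e4 : ∀ S ∈ (univ : Finset (Fin n)).powerset,
      ((-1:ℝ)^S.card * ((∏ i ∈ S, (a i - 1)) * x^S.card)) * (∏ i ∈ univ \ S, a i)
        + ((∏ i ∈ S, (a i - 1)) * x^S.card) * ∏ i ∈ univ \ S, a i
      = ∑ T ∈ S.powerset,
          (((-1:ℝ)^S.card + 1) * x^S.card * (-1:ℝ)^(S.card - T.card)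
            * ((∏ i ∈ T, a i) * ∏ i ∈ univ \ S, a i)) := by
    intro S _
    rw [show ((-1:ℝ)^S.card * ((∏ i ∈ S, (a i - 1)) * x^S.card)) * (∏ i ∈ univ \ S, a i)
        + ((∏ i ∈ S, (a i - 1)) * x^S.card) * ∏ i ∈ univ \ S, a i
        = (((-1:ℝ)^S.card + 1) * x^S.card * ∏ i ∈ univ \ S, a i) * ∏ i ∈ S, (a i - 1)
        from by ring, e3 S, Finset.mul_sum]
    exact Finset.sum_congr rfl fun T _ => by ring
  rw [Finset.sum_congr rfl e4, aux_reindex n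
    (fun S T => ((-1:ℝ)^S.card + 1) * x^S.card * (-1:ℝ)^(S.card - T.card)
      * ((∏ i ∈ T, a i) * ∏ i ∈ univ \ S, a i))]
  -- simplify the reindexed summand
  have e5 : ∀ W ∈ (univ : Finset (Fin n)).powerset, ∀ V ∈ W.powerset,
      ((-1:ℝ)^(Vᶜ).card + 1) * x^(Vᶜ).card * (-1:ℝ)^((Vᶜ).card - (W \ V).card)
        * ((∏ i ∈ W \ V, a i) * ∏ i ∈ univ \ Vᶜ, a i)
      = ((-1:ℝ)^(n - W.card) * ∏ i ∈ W, a i)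
          * (((-1:ℝ)^(n - V.card) + 1) * x^(n - V.card)) := by
    intro W hW V hV
    have hVW : V ⊆ W := Finset.mem_powerset.mp hV
    have hWcard : W.card ≤ n := by
      simpa using Finset.card_le_univ W
    have hVcard : V.card ≤ W.card := Finset.card_le_card hVW
    have hc : (Vᶜ).card = n - V.card := by
      rw [Finset.card_compl, Fintype.card_fin]
    have huV : univ \ Vᶜ = V := by
      rw [← Finset.compl_eq_univ_sdiff, compl_compl]
    have hcd : (W \ V).card = W.card - V.card := Finset.card_sdiff_of_subset hVW
    rw [hc, huV, hcd, show n - V.card - (W.card - V.card) = n - W.card by omega,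
      Finset.prod_sdiff hVW]
    ring
  rw [Finset.sum_congr rfl (fun W hW => Finset.sum_congr rfl (e5 W hW))]
  -- inner sum over V depends only on card
  have e6 : ∀ W ∈ (univ : Finset (Fin n)).powerset,
      (∑ V ∈ W.powerset, ((-1:ℝ)^(n - W.card) * ∏ i ∈ W, a i)
          * (((-1:ℝ)^(n - V.card) + 1) * x^(n - V.card)))
      = ((-1:ℝ)^(n - W.card) * ∏ i ∈ W, a i)
          * ∑ v ∈ Finset.range (W.card + 1),
              (W.card.choose v : ℝ) * (((-1:ℝ)^(n - v) + 1) * x^(n - v)) := by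
    intro W _
    rw [← Finset.mul_sum, aux_sum_powerset_card W
      (fun v => ((-1:ℝ)^(n - v) + 1) * x^(n - v))]
  rw [Finset.sum_congr rfl e6]
  -- group outer sum by card
  erw [Finset.powerset_card_disjiUnion, Finset.sum_disjiUnion]
  have hunivcard : (univ : Finset (Fin n)).card = n := by simp
  rw [hunivcard]
  refine Finset.sum_congr rfl fun u hu => ?_
  have hun : u ≤ n := by
    simp only [Finset.mem_range] at hu; omega
  have e7 : ∀ W ∈ Finset.powersetCard u (univ : Finset (Fin n)),
      ((-1:ℝ)^(n - W.card) * ∏ i ∈ W, a i)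
          * ∑ v ∈ Finset.range (W.card + 1),
              (W.card.choose v : ℝ) * (((-1:ℝ)^(n - v) + 1) * x^(n - v))
      = (∏ i ∈ W, a i) * ((-1:ℝ)^(n - u)
          * ∑ v ∈ Finset.range (u + 1),
              (u.choose v : ℝ) * (((-1:ℝ)^(n - v) + 1) * x^(n - v))) := by
    intro W hW
    rw [(Finset.mem_powersetCard.mp hW).2]
    ring
  rw [Finset.sum_congr rfl e7, ← Finset.sum_mul]
  -- now massage the v-sum into the j-sum
  have e8 : (∑ v ∈ Finset.range (u + 1),
        (u.choose v : ℝ) * (((-1:ℝ)^(n - v) + 1) * x^(n - v)))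
      = ∑ j ∈ Finset.range (n/2+1), 2 * ((u.choose (n-2*j) : ℝ) * x^(2*j)) := by
    rw [Finset.sum_subset (Finset.range_subset_range.mpr (by omega : u + 1 ≤ n + 1))
      (fun v _ hv => by
        rw [Nat.choose_eq_zero_of_lt (by simp only [Finset.mem_range] at hv ⊢; omega)]
        simp)]
    rw [← Finset.sum_range_reflect
      (fun v => (u.choose v : ℝ) * (((-1:ℝ)^(n - v) + 1) * x^(n - v))) (n+1)]
    rw [← aux_even_filter n (fun s => (u.choose (n - s) : ℝ) * x^s)]
    refine Finset.sum_congr rfl fun s hs => ?_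
    have hsn : s ≤ n := by simp only [Finset.mem_range] at hs; omega
    rw [show n + 1 - 1 - s = n - s by omega, Nat.sub_sub_self hsn]
    ring
  rw [e8]
  ring

lemma aux_rhs (n : ℕ) (σ' : ℕ → ℝ) (x : ℝ) :
    2 * ∑ j ∈ Finset.range (n/2+1), (n.choose (2*j) : ℝ)
        * (∑ i ∈ Finset.range (n+1), ((2*j).choose (n-i) : ℝ) * (-1:ℝ)^(n-i)
            * (σ' i / (n.choose i : ℝ))) * x^(2*j)
      = ∑ u ∈ Finset.range (n+1), (-1:ℝ)^(n-u) * σ' u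
          * ∑ j ∈ Finset.range (n/2+1), 2 * ((u.choose (n-2*j) : ℝ) * x^(2*j)) := by
  rw [Finset.mul_sum]
  rw [Finset.sum_congr rfl (fun j _ => show
      2 * ((n.choose (2*j) : ℝ)
        * (∑ i ∈ Finset.range (n+1), ((2*j).choose (n-i) : ℝ) * (-1:ℝ)^(n-i)
            * (σ' i / (n.choose i : ℝ))) * x^(2*j))
      = ∑ i ∈ Finset.range (n+1),
          2 * ((n.choose (2*j) : ℝ) * (((2*j).choose (n-i) : ℝ) * (-1:ℝ)^(n-i)
            * (σ' i / (n.choose i : ℝ))) * x^(2*j)) from by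
    rw [Finset.mul_sum, Finset.sum_mul, Finset.mul_sum])]
  rw [Finset.sum_comm]
  refine Finset.sum_congr rfl fun u hu => ?_
  have hun : u ≤ n := by simp only [Finset.mem_range] at hu; omega
  rw [Finset.mul_sum]
  refine Finset.sum_congr rfl fun j hj => ?_
  have hjn : 2*j ≤ n := by simp only [Finset.mem_range] at hj; omega
  have key : ((n.choose (2*j) : ℝ)) * (((2*j).choose (n-u) : ℝ))
      = (n.choose u : ℝ) * (u.choose (n-2*j) : ℝ) := by
    exact_mod_cast congrArg (Nat.cast : ℕ → ℝ) (aux_choose_id n u j hun hjn)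
  have hC : (n.choose u : ℝ) ≠ 0 := by
    exact_mod_cast (Nat.choose_pos hun).ne'
  field_simp
  ring_nf
  ring_nf at key
  linear_combination (σ' u * x^(2*j)) * key

lemma aux_abs (n : ℕ) (z : Fin n → ℝ) (hz : ∀ i, z i ≠ 1) (a : Fin n → ℝ)
    (ha : ∀ i, a i = 1 + 2 * z i / (z i - 1)^2) (w : ℂ) (hw : ‖w‖ = 1) :
    ‖∏ i, (w - (z i : ℂ)) / (1 - (z i : ℂ))‖^2
      = ∏ i, (a i - (a i - 1) * w.re) := by
  have hns : Complex.normSq w = 1 := by rw [← Complex.sq_norm, hw]; norm_num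
  have him : w.im^2 = 1 - w.re^2 := by
    have h2 := Complex.normSq_apply w
    nlinarith [h2, hns]
  rw [Complex.sq_norm, map_prod Complex.normSq]
  refine Finset.prod_congr rfl fun i _ => ?_
  have hzi : z i - 1 ≠ 0 := sub_ne_zero.mpr (hz i)
  rw [map_div₀, Complex.normSq_apply, Complex.normSq_apply, ha i]
  simp only [Complex.sub_re, Complex.sub_im, Complex.ofReal_re, Complex.ofReal_im,
    Complex.one_re, Complex.one_im, sub_zero, sub_self, mul_zero, add_zero]
  have h1z : (1 : ℝ) - z i ≠ 0 := sub_ne_zero.mpr (Ne.symm (hz i))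
  rw [div_eq_iff (mul_ne_zero h1z h1z)]
  field_simp
  linear_combination (z i ^ 2 - 2 * z i + 1) * him


theorem stmt_1 (n : ℕ) (hn : 1 ≤ n) (z : Fin n → ℝ)
    (hz : ∀ i, z i ≠ 1) (hroot : ∃ i, z i = -1)
    (P : ℂ → ℂ) (hP : ∀ w : ℂ, P w = ∏ i, (w - (z i : ℂ)) / (1 - (z i : ℂ)))
    (a : Fin n → ℝ) (ha : ∀ i, a i = 1 + 2 * z i / (z i - 1) ^ 2)
    (σ : ℕ → ℝ)
    (hσ : ∀ k, σ k = ∑ S ∈ Finset.powersetCard k (Finset.univ : Finset (Fin n)),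
      ∏ i ∈ S, a i)
    (ρ : ℕ → ℝ) (hρ : ∀ k, ρ k = σ k / (n.choose k : ℝ))
    (hΔ : ∀ k ≤ n / 2,
      0 ≤ ∑ j ∈ Finset.Icc (n - 2 * k) n,
        ((2 * k).choose (n - j) : ℝ) * (-1 : ℝ) ^ (n - j) * ρ j) :
    ∀ w : ℂ, ‖w‖ = 1 →
      ‖P w‖ ^ 2 + ‖P (-w)‖ ^ 2 ≤ 1 := by
  intro w hw
  set x := w.re with hxdef
  have h1 : ‖P w‖^2 = ∏ i, (a i - (a i - 1) * x) := by
    rw [hP]; exact aux_abs n z hz a ha w hw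
  have h2 : ‖P (-w)‖^2 = ∏ i, (a i + (a i - 1) * x) := by
    rw [hP]
    rw [aux_abs n z hz a ha (-w) (by rw [norm_neg]; exact hw)]
    refine Finset.prod_congr rfl fun i _ => ?_
    rw [Complex.neg_re]; ring
  set D : ℕ → ℝ := fun j => ∑ i ∈ Finset.range (n+1),
      ((2*j).choose (n-i) : ℝ) * (-1:ℝ)^(n-i) * ρ i with hD
  have hDnn : ∀ j ∈ Finset.range (n/2+1), 0 ≤ D j := by
    intro j hj
    have hj2 : j ≤ n/2 := by simp only [Finset.mem_range] at hj; omega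
    have h0 := hΔ j hj2
    have heq : (∑ i ∈ Finset.Icc (n-2*j) n,
        ((2*j).choose (n-i):ℝ)*(-1:ℝ)^(n-i)*ρ i) = D j := by
      refine Finset.sum_subset ?_ ?_
      · intro i hi
        simp only [Finset.mem_Icc, Finset.mem_range] at *
        omega
      · intro i hi hni
        simp only [Finset.mem_Icc, Finset.mem_range] at hi hni
        rw [Nat.choose_eq_zero_of_lt (by omega : 2*j < n - i)]
        simp
    rw [← heq]
    exact h0
  have hid : ∀ y : ℝ, (∏ i, (a i - (a i - 1) * y)) + (∏ i, (a i + (a i - 1) * y))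
      = 2 * ∑ j ∈ Finset.range (n/2+1), (n.choose (2*j):ℝ) * D j * y^(2*j) := by
    intro y
    have hD' : ∀ j, (∑ i ∈ Finset.range (n+1), ((2*j).choose (n-i) : ℝ) * (-1:ℝ)^(n-i)
        * ((∑ S ∈ Finset.powersetCard i Finset.univ, ∏ t ∈ S, a t) / (n.choose i : ℝ)))
        = D j := by
      intro j
      refine Finset.sum_congr rfl fun i _ => ?_
      rw [hρ i, hσ i]
    rw [aux_lhs n a y, ← aux_rhs n
      (fun i => ∑ S ∈ Finset.powersetCard i Finset.univ, ∏ t ∈ S, a t) y]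
    rw [Finset.sum_congr rfl (fun j _ => by rw [hD' j])]
  have hone : (∏ i, (a i - (a i - 1) * 1)) + (∏ i, (a i + (a i - 1) * 1)) = 1 := by
    obtain ⟨i0, hi0⟩ := hroot
    have ha0 : a i0 = 1/2 := by rw [ha i0, hi0]; norm_num
    have p1 : (∏ i, (a i - (a i - 1) * 1)) = 1 := by
      rw [Finset.prod_congr rfl (fun i (_ : i ∈ Finset.univ) =>
        show a i - (a i - 1) * 1 = 1 by ring)]
      simp
    have p2 : (∏ i, (a i + (a i - 1) * 1)) = 0 :=
      Finset.prod_eq_zero (Finset.mem_univ i0) (by rw [ha0]; norm_num)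
    rw [p1, p2]; norm_num
  have hx1 : x^2 ≤ 1 := by
    have h := Complex.abs_re_le_norm w
    rw [hw] at h
    have h' := abs_le.mp h
    nlinarith [h'.1, h'.2]
  have hle : (∑ j ∈ Finset.range (n/2+1), (n.choose (2*j):ℝ) * D j * x^(2*j))
      ≤ ∑ j ∈ Finset.range (n/2+1), (n.choose (2*j):ℝ) * D j * 1^(2*j) := by
    refine Finset.sum_le_sum fun j hj => ?_
    have hxj : x^(2*j) ≤ 1^(2*j) := by
      rw [pow_mul, pow_mul, one_pow, one_pow]
      exact pow_le_one₀ (sq_nonneg x) hx1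
    have hCD : (0:ℝ) ≤ (n.choose (2*j):ℝ) * D j :=
      mul_nonneg (Nat.cast_nonneg _) (hDnn j hj)
    exact mul_le_mul_of_nonneg_left hxj hCD
  calc ‖P w‖ ^ 2 + ‖P (-w)‖ ^ 2
      = 2 * ∑ j ∈ Finset.range (n/2+1), (n.choose (2*j):ℝ) * D j * x^(2*j) := by
        rw [h1, h2, hid x]
    _ ≤ 2 * ∑ j ∈ Finset.range (n/2+1), (n.choose (2*j):ℝ) * D j * 1^(2*j) := by
        linarith
    _ = (∏ i, (a i - (a i - 1) * 1)) + (∏ i, (a i + (a i - 1) * 1)) := (hid 1).symm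
    _ = 1 := hone
end

section
/- Let n ≥ 1 and let z₁,…,zₙ be real numbers with zᵢ ≤ 0 for every i and with at least one zᵢ equal to −1. Then T(φ) ≤ 1 for every real φ. -/
lemma sq_abs' (w : ℂ) : ‖w‖ ^ 2 = w.re ^ 2 + w.im ^ 2 := by
  rw [Complex.sq_norm, Complex.normSq_apply]; ring

lemma psi_pos_eval (z φ : ℝ) :
    psi (z : ℂ) (Complex.exp (φ * Complex.I)) =
      ((Real.cos φ - z) ^ 2 + (Real.sin φ) ^ 2) / (1 - z) ^ 2 := by
  unfold psi
  rw [sq_abs', sq_abs']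
  simp [Complex.sub_re, Complex.sub_im, Complex.exp_ofReal_mul_I_re,
    Complex.exp_ofReal_mul_I_im]

lemma psi_neg_eval (z φ : ℝ) :
    psi (z : ℂ) (-Complex.exp (φ * Complex.I)) =
      ((Real.cos φ + z) ^ 2 + (Real.sin φ) ^ 2) / (1 - z) ^ 2 := by
  unfold psi
  rw [sq_abs', sq_abs']
  simp [Complex.sub_re, Complex.sub_im, Complex.neg_re, Complex.neg_im,
    Complex.exp_ofReal_mul_I_re, Complex.exp_ofReal_mul_I_im]
  ring_nf

lemma psi_nonneg (z₀ w : ℂ) : 0 ≤ psi z₀ w := by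
  unfold psi; positivity

lemma psi_pos_le_one (z φ : ℝ) (hz : z ≤ 0) :
    psi (z : ℂ) (Complex.exp (φ * Complex.I)) ≤ 1 := by
  rw [psi_pos_eval]
  have hden : (0:ℝ) < (1 - z) ^ 2 := by nlinarith
  rw [div_le_one hden]
  nlinarith [Real.sin_sq_add_cos_sq φ, Real.cos_le_one φ, Real.neg_one_le_cos φ]

lemma psi_neg_le_one (z φ : ℝ) (hz : z ≤ 0) :
    psi (z : ℂ) (-Complex.exp (φ * Complex.I)) ≤ 1 := by
  rw [psi_neg_eval]
  have hden : (0:ℝ) < (1 - z) ^ 2 := by nlinarith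
  rw [div_le_one hden]
  nlinarith [Real.sin_sq_add_cos_sq φ, Real.cos_le_one φ, Real.neg_one_le_cos φ]

lemma psi_root_sum (φ : ℝ) :
    psi ((-1 : ℝ) : ℂ) (Complex.exp (φ * Complex.I)) +
      psi ((-1 : ℝ) : ℂ) (-Complex.exp (φ * Complex.I)) = 1 := by
  rw [psi_pos_eval, psi_neg_eval]
  have := Real.sin_sq_add_cos_sq φ
  field_simp
  nlinarith [this]

theorem stmt_2 (n : ℕ) (hn : 1 ≤ n) (z : Fin n → ℝ)
    (hz : ∀ i, z i ≤ 0) (hroot : ∃ i, z i = -1) :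
    ∀ φ : ℝ, T z φ ≤ 1 := by
  intro φ
  obtain ⟨j, hj⟩ := hroot
  unfold T
  set e := Complex.exp (φ * Complex.I) with he
  have hprodA : (∏ i, psi (z i) e) ≤ psi (z j) e := by
    rw [← Finset.mul_prod_erase Finset.univ _ (Finset.mem_univ j)]
    calc psi (z j) e * ∏ i ∈ Finset.univ.erase j, psi (z i) e
        ≤ psi (z j) e * 1 := by
          apply mul_le_mul_of_nonneg_left _ (psi_nonneg _ _)
          exact Finset.prod_le_one (fun i _ => psi_nonneg _ _)
            (fun i _ => psi_pos_le_one _ _ (hz i))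
      _ = psi (z j) e := mul_one _
  have hprodB : (∏ i, psi (z i) (-e)) ≤ psi (z j) (-e) := by
    rw [← Finset.mul_prod_erase Finset.univ _ (Finset.mem_univ j)]
    calc psi (z j) (-e) * ∏ i ∈ Finset.univ.erase j, psi (z i) (-e)
        ≤ psi (z j) (-e) * 1 := by
          apply mul_le_mul_of_nonneg_left _ (psi_nonneg _ _)
          exact Finset.prod_le_one (fun i _ => psi_nonneg _ _)
            (fun i _ => psi_neg_le_one _ _ (hz i))
      _ = psi (z j) (-e) := mul_one _
  have hsum : psi (z j) e + psi (z j) (-e) = 1 := by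
    rw [hj, he]; exact_mod_cast psi_root_sum φ
  linarith
end

section
/- Let n ≥ 1 and let z₁,…,zₙ be real numbers with zᵢ ≤ 0 for every i and with at least one zᵢ equal to −1, and let P(z) = ∏_{i=1}^n (z − zᵢ)/(1 − zᵢ) (so P(1) = 1). Then |P(z)|² + |P(−z)|² ≤ 1 for every complex z with |z| = 1. -/
lemma key_bound (n : ℕ) (z : Fin n → ℝ) (hz : ∀ i, z i ≤ 0) (j : Fin n) (hj : z j = -1)
    (w : ℂ) (hw : w.re ^ 2 + w.im ^ 2 = 1) :
    ‖∏ i, (w - (z i : ℂ)) / (1 - (z i : ℂ))‖ ^ 2 ≤ (1 + w.re) / 2 := by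
  have hre : w.re ≤ 1 := by nlinarith [sq_nonneg w.im, sq_nonneg (w.re - 1)]
  have habs : ‖∏ i, (w - (z i : ℂ)) / (1 - (z i : ℂ))‖ ^ 2
      = ∏ i, ‖(w - (z i : ℂ)) / (1 - (z i : ℂ))‖ ^ 2 := by
    rw [norm_prod, Finset.prod_pow]
  rw [habs]
  set g : Fin n → ℝ := fun i => ‖(w - (z i : ℂ)) / (1 - (z i : ℂ))‖ ^ 2 with hg
  have hgval : ∀ i, g i = ((w.re - z i) ^ 2 + w.im ^ 2) / (1 - z i) ^ 2 := by
    intro i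
    have h1 : (1 : ℝ) - z i > 0 := by linarith [hz i]
    simp only [hg, norm_div, div_pow, Complex.sq_norm, Complex.normSq_apply,
      Complex.sub_re, Complex.sub_im, Complex.ofReal_re, Complex.ofReal_im,
      Complex.one_re, Complex.one_im]
    ring_nf
  have hgnonneg : ∀ i, 0 ≤ g i := fun i => by positivity
  have hgle1 : ∀ i, g i ≤ 1 := by
    intro i
    rw [hgval i]
    have h1 : (0 : ℝ) < (1 - z i) ^ 2 := by
      have := hz i; nlinarith
    rw [div_le_one h1]
    nlinarith [hz i]
  have hgj : g j = (1 + w.re) / 2 := by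
    rw [hgval j, hj]
    nlinarith
  calc ∏ i, g i = g j * ∏ i ∈ Finset.univ.erase j, g i := by
        rw [Finset.mul_prod_erase _ _ (Finset.mem_univ j)]
    _ ≤ g j * 1 := by
        apply mul_le_mul_of_nonneg_left _ (hgnonneg j)
        exact Finset.prod_le_one (fun i _ => hgnonneg i) (fun i _ => hgle1 i)
    _ = (1 + w.re) / 2 := by rw [mul_one, hgj]

theorem stmt_3 (n : ℕ) (hn : 1 ≤ n) (z : Fin n → ℝ)
    (hz : ∀ i, z i ≤ 0) (hroot : ∃ i, z i = -1)
    (P : ℂ → ℂ) (hP : ∀ w : ℂ, P w = ∏ i, (w - (z i : ℂ)) / (1 - (z i : ℂ))) :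
    ∀ w : ℂ, ‖w‖ = 1 →
      ‖P w‖ ^ 2 + ‖P (-w)‖ ^ 2 ≤ 1 := by
  intro w hw
  obtain ⟨j, hj⟩ := hroot
  have hw2 : w.re ^ 2 + w.im ^ 2 = 1 := by
    have := Complex.sq_norm w
    rw [hw] at this
    simp [Complex.normSq_apply] at this
    nlinarith
  have h1 := key_bound n z hz j hj w hw2
  have h2 := key_bound n z hz j hj (-w) (by simp [Complex.neg_re, Complex.neg_im]; nlinarith)
  rw [hP w, hP (-w)]
  have : (-w).re = -w.re := Complex.neg_re w
  rw [this] at h2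
  linarith
end

section
/- Let z₂ be a complex number with z₂ ≠ 1, and let P(z) = ((z + 1)/2) · ((z − z₂)/(1 − z₂)), the degree-2 polynomial with P(1) = 1 whose roots are −1 and z₂. Then |P(z)|² + |P(−z)|² ≤ 1 holds for every complex z with |z| = 1 if and only if z₂ is real and z₂ ≤ 0. -/
lemma key (z₂ : ℂ) (hz₂ : z₂ ≠ 1) (w : ℂ) (hw : ‖w‖ = 1) :
    ‖((w + 1) / 2) * ((w - z₂) / (1 - z₂))‖ ^ 2 +
      ‖((-w + 1) / 2) * ((-w - z₂) / (1 - z₂))‖ ^ 2 ≤ 1 ↔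
    z₂.re ≤ w.re * (w.re * z₂.re + w.im * z₂.im) := by
  have hd : (0:ℝ) < Complex.normSq (1 - z₂) := by
    rw [Complex.normSq_pos, sub_ne_zero]
    exact fun h => hz₂ h.symm
  have hw2 : Complex.normSq w = 1 := by rw [← Complex.sq_norm, hw]; norm_num
  have h2 : (0:ℝ) < Complex.normSq 2 := by norm_num [Complex.normSq_apply]
  simp only [Complex.sq_norm, Complex.normSq_mul, Complex.normSq_div]
  rw [div_mul_div_comm, div_mul_div_comm, ← add_div, div_le_one (mul_pos h2 hd)]
  simp only [Complex.normSq_apply, Complex.add_re, Complex.add_im, Complex.sub_re,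
    Complex.sub_im, Complex.neg_re, Complex.neg_im, Complex.one_re, Complex.one_im,
    Complex.re_ofNat, Complex.im_ofNat] at *
  have heq : ((w.re + 1) * (w.re + 1) + (w.im + 0) * (w.im + 0)) *
        ((w.re - z₂.re) * (w.re - z₂.re) + (w.im - z₂.im) * (w.im - z₂.im)) +
      ((-w.re + 1) * (-w.re + 1) + (-w.im + 0) * (-w.im + 0)) *
        ((-w.re - z₂.re) * (-w.re - z₂.re) + (-w.im - z₂.im) * (-w.im - z₂.im)) =
      ((2:ℝ) * 2 + 0 * 0) * ((1 - z₂.re) * (1 - z₂.re) + (0 - z₂.im) * (0 - z₂.im))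
      + 8 * (z₂.re - w.re * (w.re * z₂.re + w.im * z₂.im)) := by
    linear_combination (2 * (w.re * w.re + w.im * w.im + 2 + z₂.re * z₂.re
      + z₂.im * z₂.im)) * hw2
  constructor <;> intro h <;> linarith

theorem stmt_4 (z₂ : ℂ) (hz₂ : z₂ ≠ 1)
    (P : ℂ → ℂ) (hP : ∀ w : ℂ, P w = ((w + 1) / 2) * ((w - z₂) / (1 - z₂))) :
    (∀ w : ℂ, ‖w‖ = 1 →
        ‖P w‖ ^ 2 + ‖P (-w)‖ ^ 2 ≤ 1) ↔
      (z₂.im = 0 ∧ z₂.re ≤ 0) := by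
  have hiff : ∀ w : ℂ, ‖w‖ = 1 →
      (‖P w‖ ^ 2 + ‖P (-w)‖ ^ 2 ≤ 1 ↔
        z₂.re ≤ w.re * (w.re * z₂.re + w.im * z₂.im)) := by
    intro w hw
    rw [hP w, hP (-w)]
    exact key z₂ hz₂ w hw
  constructor
  · intro H
    have ha : z₂.re ≤ 0 := by
      have h := (hiff Complex.I (by simp)).mp (H Complex.I (by simp))
      simpa using h
    have hc : ∀ ε : ℝ, 2 * z₂.re * ε ^ 2 ≤ z₂.im * ε * (1 - ε ^ 2) := by
      intro ε
      set w : ℂ := ⟨(1 - ε ^ 2) / (1 + ε ^ 2), 2 * ε / (1 + ε ^ 2)⟩ with hwdef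
      have hden : (0:ℝ) < 1 + ε ^ 2 := by positivity
      have hns : Complex.normSq w = 1 := by
        simp only [Complex.normSq_apply, hwdef]
        field_simp
        ring
      have hwabs : ‖w‖ = 1 := by
        rw [Complex.norm_def, hns, Real.sqrt_one]
      have h := (hiff w hwabs).mp (H w hwabs)
      simp only [hwdef] at h
      have hne : (1 + ε ^ 2) ≠ 0 := ne_of_gt hden
      have e : (1 - ε ^ 2) / (1 + ε ^ 2) *
          ((1 - ε ^ 2) / (1 + ε ^ 2) * z₂.re + 2 * ε / (1 + ε ^ 2) * z₂.im) =
          ((1 - ε ^ 2) * ((1 - ε ^ 2) * z₂.re + 2 * ε * z₂.im)) /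
            ((1 + ε ^ 2) * (1 + ε ^ 2)) := by
        field_simp
      rw [e, le_div_iff₀ (by positivity)] at h
      nlinarith [h]
    refine ⟨?_, ha⟩
    set a := z₂.re
    set b := z₂.im
    set d := 1 + b ^ 2 - 2 * a with hd
    have hdpos : (0:ℝ) < d := by nlinarith [sq_nonneg b]
    have hdne : d ≠ 0 := ne_of_gt hdpos
    have h := hc (-b / d)
    have h2 : 2 * a * b ^ 2 * d ≤ -(b ^ 2) * (d ^ 2 - b ^ 2) := by
      have e1 : 2 * a * (-b / d) ^ 2 = (2 * a * b ^ 2) / d ^ 2 := by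
        field_simp
      have e2 : b * (-b / d) * (1 - (-b / d) ^ 2) =
          (-(b ^ 2) * (d ^ 2 - b ^ 2)) / (d ^ 2 * d) := by
        field_simp
      rw [e1, e2] at h
      rw [div_le_div_iff₀ (by positivity) (by positivity)] at h
      nlinarith [h, hdpos, mul_pos hdpos hdpos]
    have hgood : (0:ℝ) < 2 * a * d + d ^ 2 - b ^ 2 := by
      rw [hd]
      nlinarith [ha, sq_nonneg b, sq_nonneg (b ^ 2), mul_nonneg (neg_nonneg.mpr ha) (sq_nonneg b)]
    have hb2 : b ^ 2 ≤ 0 := by nlinarith [h2, hgood, sq_nonneg b]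
    have : b ^ 2 = 0 := le_antisymm hb2 (sq_nonneg b)
    exact pow_eq_zero_iff (by norm_num) |>.mp this
  · rintro ⟨hb, ha⟩ w hw
    rw [hiff w hw]
    have hns : Complex.normSq w = 1 := by rw [← Complex.sq_norm, hw]; norm_num
    rw [Complex.normSq_apply] at hns
    rw [hb]
    nlinarith [sq_nonneg w.im, sq_nonneg w.re, ha]
end

section
/- Let z₁, z₂ be complex numbers, both ≠ 1, and let P(z) = ((z + 1)/2) · ((z − z₁)/(1 − z₁)) · ((z − z₂)/(1 − z₂)), the degree-3 polynomial with P(1) = 1 whose roots are −1, z₁, z₂. Writing zᵢ = xᵢ + i·yᵢ, set Aᵢ = F₁(xᵢ, yᵢ) and Bᵢ = F₃(xᵢ, yᵢ). Then |P(z)|² + |P(−z)|² ≤ 1 holds for every complex z with |z| = 1 if and only if B₁ + B₂ = 0 and 1 − A₁A₂ − B₁B₂ ≥ 0. -/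
/-- `F₁(x,y) = 1 + 2x/((x−1)² + y²)`. -/
noncomputable def F₁ (x y : ℝ) : ℝ := 1 + 2 * x / ((x - 1) ^ 2 + y ^ 2)

/-- `F₃(x,y) = −2y/((x−1)² + y²)`. -/
noncomputable def F₃ (x y : ℝ) : ℝ := -(2 * y) / ((x - 1) ^ 2 + y ^ 2)

lemma polykey (c s x1 y1 x2 y2 : ℝ) (h : c ^ 2 + s ^ 2 = 1) :
    ((c+1)^2+s^2) * ((c-x1)^2+(s-y1)^2) * ((c-x2)^2+(s-y2)^2)
      + ((1-c)^2+s^2) * ((c+x1)^2+(s+y1)^2) * ((c+x2)^2+(s+y2)^2)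
    = 4*((x1-1)^2+y1^2)*((x2-1)^2+y2^2)
      - 8*(y1*((x2-1)^2+y2^2)+y2*((x1-1)^2+y1^2))*c*s
      - 4*s^2*(((x1-1)^2+y1^2)*((x2-1)^2+y2^2)
          - (((x1-1)^2+y1^2)+2*x1)*(((x2-1)^2+y2^2)+2*x2) - 4*y1*y2) := by
  linear_combination (4 + 4 * y2 ^ 2 + (-8) * x2 + 4 * x2 ^ 2 + 4 * y1 ^ 2 + 2 * y1 ^ 2 * y2 ^ 2 + (-8) * y1 ^ 2 * x2 + 2 * y1 ^ 2 * x2 ^ 2 + (-8) * x1 + (-8) * x1 * y2 ^ 2 + 16 * x1 * x2 + (-8) * x1 * x2 ^ 2 + 4 * x1 ^ 2 + 2 * x1 ^ 2 * y2 ^ 2 + (-8) * x1 ^ 2 * x2 + 2 * x1 ^ 2 * x2 ^ 2 + 4 * s ^ 2 + 2 * s ^ 2 * y2 ^ 2 + 2 * s ^ 2 * x2 ^ 2 + 8 * s ^ 2 * y1 * y2 + 2 * s ^ 2 * y1 ^ 2 + 2 * s ^ 2 * x1 ^ 2 + 2 * s ^ 4 + (-8) * c * s * y2 + (-8) * c *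 s * y1 + 8 * c * s * y1 * x2 + 8 * c * s * x1 * y2 + 4 * c ^ 2 + 2 * c ^ 2 * y2 ^ 2 + (-8) * c ^ 2 * x2 + 2 * c ^ 2 * x2 ^ 2 + 2 * c ^ 2 * y1 ^ 2 + (-8) * c ^ 2 * x1 + 8 * c ^ 2 * x1 * x2 + 2 * c ^ 2 * x1 ^ 2 + 4 * c ^ 2 * s ^ 2 + 2 * c ^ 4) * h

lemma key2 (c s x1 y1 x2 y2 : ℝ) (h : c ^ 2 + s ^ 2 = 1)
    (h1 : (x1-1)^2+y1^2 ≠ 0) (h2 : (x2-1)^2+y2^2 ≠ 0) :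
    (((c+1)^2+s^2)/4) * (((c-x1)^2+(s-y1)^2)/((x1-1)^2+y1^2)) * (((c-x2)^2+(s-y2)^2)/((x2-1)^2+y2^2))
      + (((1-c)^2+s^2)/4) * (((c+x1)^2+(s+y1)^2)/((x1-1)^2+y1^2)) * (((c+x2)^2+(s+y2)^2)/((x2-1)^2+y2^2))
    = 1 + (F₃ x1 y1 + F₃ x2 y2) * c * s
        - (1 - F₁ x1 y1 * F₁ x2 y2 - F₃ x1 y1 * F₃ x2 y2) * s ^ 2 := by
  have e1 : (((c+1)^2+s^2)/4) * (((c-x1)^2+(s-y1)^2)/((x1-1)^2+y1^2)) * (((c-x2)^2+(s-y2)^2)/((x2-1)^2+y2^2))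
      + (((1-c)^2+s^2)/4) * (((c+x1)^2+(s+y1)^2)/((x1-1)^2+y1^2)) * (((c+x2)^2+(s+y2)^2)/((x2-1)^2+y2^2))
      = (((c+1)^2+s^2) * ((c-x1)^2+(s-y1)^2) * ((c-x2)^2+(s-y2)^2)
        + ((1-c)^2+s^2) * ((c+x1)^2+(s+y1)^2) * ((c+x2)^2+(s+y2)^2))
        / (4*((x1-1)^2+y1^2)*((x2-1)^2+y2^2)) := by
    field_simp
  have e2 : 1 + (F₃ x1 y1 + F₃ x2 y2) * c * s
        - (1 - F₁ x1 y1 * F₁ x2 y2 - F₃ x1 y1 * F₃ x2 y2) * s ^ 2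
      = (4*((x1-1)^2+y1^2)*((x2-1)^2+y2^2)
        - 8*(y1*((x2-1)^2+y2^2)+y2*((x1-1)^2+y1^2))*c*s
        - 4*s^2*(((x1-1)^2+y1^2)*((x2-1)^2+y2^2)
            - (((x1-1)^2+y1^2)+2*x1)*(((x2-1)^2+y2^2)+2*x2) - 4*y1*y2))
        / (4*((x1-1)^2+y1^2)*((x2-1)^2+y2^2)) := by
    unfold F₁ F₃
    field_simp
    ring
  rw [e1, e2, polykey c s x1 y1 x2 y2 h]

lemma dne (z : ℂ) (hz : z ≠ 1) : (z.re - 1) ^ 2 + z.im ^ 2 ≠ 0 := by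
  intro h
  have hr : z.re = 1 := by nlinarith [sq_nonneg (z.re - 1), sq_nonneg z.im]
  have hi : z.im = 0 := by nlinarith [sq_nonneg (z.re - 1), sq_nonneg z.im]
  exact hz (Complex.ext (by simp [hr]) (by simp [hi]))

theorem stmt_5 (z₁ z₂ : ℂ) (hz₁ : z₁ ≠ 1) (hz₂ : z₂ ≠ 1)
    (P : ℂ → ℂ)
    (hP : ∀ w : ℂ,
      P w = ((w + 1) / 2) * ((w - z₁) / (1 - z₁)) * ((w - z₂) / (1 - z₂)))
    (A₁ A₂ B₁ B₂ : ℝ)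
    (hA₁ : A₁ = F₁ z₁.re z₁.im) (hA₂ : A₂ = F₁ z₂.re z₂.im)
    (hB₁ : B₁ = F₃ z₁.re z₁.im) (hB₂ : B₂ = F₃ z₂.re z₂.im) :
    (∀ w : ℂ, ‖w‖ = 1 →
        ‖P w‖ ^ 2 + ‖P (-w)‖ ^ 2 ≤ 1) ↔
      (B₁ + B₂ = 0 ∧ 0 ≤ 1 - A₁ * A₂ - B₁ * B₂) := by
  have h1 := dne z₁ hz₁
  have h2 := dne z₂ hz₂
  have main : ∀ w : ℂ, ‖w‖ = 1 →
      ‖P w‖ ^ 2 + ‖P (-w)‖ ^ 2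
        = 1 + (B₁ + B₂) * w.re * w.im - (1 - A₁ * A₂ - B₁ * B₂) * w.im ^ 2 := by
    intro w hw
    have hcs : w.re ^ 2 + w.im ^ 2 = 1 := by
      have hn : Complex.normSq w = 1 := by rw [← Complex.sq_norm, hw]; norm_num
      rw [Complex.normSq_apply] at hn
      linear_combination hn
    have e : ‖P w‖ ^ 2 + ‖P (-w)‖ ^ 2
        = (((w.re+1)^2+w.im^2)/4) * (((w.re - z₁.re)^2+(w.im - z₁.im)^2)/((z₁.re-1)^2+z₁.im^2)) * (((w.re - z₂.re)^2+(w.im - z₂.im)^2)/((z₂.re-1)^2+z₂.im^2))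
          + (((1-w.re)^2+w.im^2)/4) * (((w.re+z₁.re)^2+(w.im+z₁.im)^2)/((z₁.re-1)^2+z₁.im^2)) * (((w.re+z₂.re)^2+(w.im+z₂.im)^2)/((z₂.re-1)^2+z₂.im^2)) := by
      rw [Complex.sq_norm, Complex.sq_norm, hP w, hP (-w)]
      simp only [map_mul, map_div₀, Complex.normSq_apply, Complex.add_re, Complex.add_im,
        Complex.sub_re, Complex.sub_im, Complex.neg_re, Complex.neg_im, Complex.one_re,
        Complex.one_im, Complex.re_ofNat, Complex.im_ofNat]
      ring
    rw [e, hA₁, hA₂, hB₁, hB₂]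
    exact key2 w.re w.im z₁.re z₁.im z₂.re z₂.im hcs h1 h2
  constructor
  · intro H
    have hI : ‖Complex.I‖ = 1 := Complex.norm_I
    have hγ : 0 ≤ 1 - A₁ * A₂ - B₁ * B₂ := by
      have h := H Complex.I hI
      rw [main Complex.I hI] at h
      simp [Complex.I_re, Complex.I_im] at h
      linarith
    refine ⟨?_, hγ⟩
    by_contra hβ
    set β := B₁ + B₂ with hβdef
    set γ := 1 - A₁ * A₂ - B₁ * B₂ with hγdef
    set M : ℝ := |γ| + |β| + 1 with hMdef
    have hM : 0 < M := by positivity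
    have hMγ : γ < M := by
      have := le_abs_self γ
      have := abs_nonneg β
      simp only [hMdef]; linarith
    set q : ℝ := β / M with hqdef
    have hq1 : (0:ℝ) < 1 + q ^ 2 := by positivity
    set c : ℝ := Real.sqrt (1 / (1 + q ^ 2)) with hcdef
    set s : ℝ := q * c with hsdef
    have hc2 : c ^ 2 = 1 / (1 + q ^ 2) := Real.sq_sqrt (by positivity)
    have hcpos : 0 < c := Real.sqrt_pos.2 (by positivity)
    have hcs : c ^ 2 + s ^ 2 = 1 := by
      rw [hsdef, mul_pow, hc2]
      field_simp
    set w : ℂ := Complex.mk c s with hwdef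
    have hwre : w.re = c := rfl
    have hwim : w.im = s := rfl
    have hw : ‖w‖ = 1 := by
      rw [Complex.norm_def, Complex.normSq_apply, hwre, hwim]
      rw [show c * c + s * s = 1 by linear_combination hcs]
      exact Real.sqrt_one
    have h := H w hw
    rw [main w hw, hwre, hwim] at h
    have hβ2 : 0 < β ^ 2 := by positivity
    have hkey : β * c * s - γ * s ^ 2 = c ^ 2 * (β ^ 2 / M ^ 2) * (M - γ) := by
      rw [hsdef, hqdef]
      field_simp
    have hpos : 0 < β * c * s - γ * s ^ 2 := by
      rw [hkey]
      have : 0 < c ^ 2 := by positivity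
      have : 0 < M - γ := by linarith
      positivity
    linarith
  · rintro ⟨hb, hg⟩ w hw
    rw [main w hw, hb]
    have := mul_nonneg hg (sq_nonneg w.im)
    linarith
end

section
/- Let x₁, x₂ be real numbers, both ≠ 1, and let P(z) = ((z + 1)/2) · ((z − x₁)/(1 − x₁)) · ((z − x₂)/(1 − x₂)), the degree-3 polynomial with P(1) = 1 whose roots are −1, x₁, x₂. Then |P(z)|² + |P(−z)|² ≤ 1 holds for every complex z with |z| = 1 if and only if x₁x₂(x₁ + x₂ − 2) + x₁ + x₂ ≤ 0. -/
lemma key_id (x₁ x₂ : ℝ) (hx₁ : x₁ ≠ 1) (hx₂ : x₂ ≠ 1) (w : ℂ)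
    (hw : ‖w‖ = 1) :
    ‖((w + 1) / 2) * ((w - (x₁ : ℂ)) / (1 - (x₁ : ℂ))) *
        ((w - (x₂ : ℂ)) / (1 - (x₂ : ℂ)))‖ ^ 2
    + ‖((-w + 1) / 2) * ((-w - (x₁ : ℂ)) / (1 - (x₁ : ℂ))) *
        ((-w - (x₂ : ℂ)) / (1 - (x₂ : ℂ)))‖ ^ 2
    = 1 + 2 * (x₁ * x₂ * (x₁ + x₂ - 2) + x₁ + x₂) * (w.im) ^ 2
        / ((1 - x₁) ^ 2 * (1 - x₂) ^ 2) := by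
  have h1 : w.re ^ 2 + w.im ^ 2 = 1 := by
    have := Complex.sq_norm w
    rw [hw] at this
    simpa [Complex.normSq_apply, sq] using this.symm
  have ha : (1 : ℝ) - x₁ ≠ 0 := sub_ne_zero.mpr (Ne.symm hx₁)
  have hb : (1 : ℝ) - x₂ ≠ 0 := sub_ne_zero.mpr (Ne.symm hx₂)
  have e1 : Complex.normSq (w + 1) = (w.re + 1) ^ 2 + w.im ^ 2 := by
    simp [Complex.normSq_apply]; ring
  have e2 : Complex.normSq (-w + 1) = (-w.re + 1) ^ 2 + w.im ^ 2 := by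
    simp [Complex.normSq_apply]; ring
  have e3 : Complex.normSq (w - (x₁ : ℂ)) = (w.re - x₁) ^ 2 + w.im ^ 2 := by
    simp [Complex.normSq_apply]; ring
  have e4 : Complex.normSq (-w - (x₁ : ℂ)) = (-w.re - x₁) ^ 2 + w.im ^ 2 := by
    simp [Complex.normSq_apply]; ring
  have e5 : Complex.normSq (w - (x₂ : ℂ)) = (w.re - x₂) ^ 2 + w.im ^ 2 := by
    simp [Complex.normSq_apply]; ring
  have e6 : Complex.normSq (-w - (x₂ : ℂ)) = (-w.re - x₂) ^ 2 + w.im ^ 2 := by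
    simp [Complex.normSq_apply]; ring
  have e7 : Complex.normSq (2 : ℂ) = 4 := by
    simp [Complex.normSq_apply]; norm_num
  have e8 : Complex.normSq (1 - (x₁ : ℂ)) = (1 - x₁) ^ 2 := by
    simp [Complex.normSq_apply]; ring
  have e9 : Complex.normSq (1 - (x₂ : ℂ)) = (1 - x₂) ^ 2 := by
    simp [Complex.normSq_apply]; ring
  simp only [map_mul, map_div₀, norm_mul, norm_div, mul_pow, div_pow, Complex.sq_norm,
    e1, e2, e3, e4, e5, e6, e7, e8, e9]
  have him : w.im ^ 2 = 1 - w.re ^ 2 := by linarith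
  rw [him]
  field_simp
  ring

theorem stmt_6 (x₁ x₂ : ℝ) (hx₁ : x₁ ≠ 1) (hx₂ : x₂ ≠ 1)
    (P : ℂ → ℂ)
    (hP : ∀ w : ℂ,
      P w = ((w + 1) / 2) * ((w - (x₁ : ℂ)) / (1 - (x₁ : ℂ))) *
        ((w - (x₂ : ℂ)) / (1 - (x₂ : ℂ)))) :
    (∀ w : ℂ, ‖w‖ = 1 →
        ‖P w‖ ^ 2 + ‖P (-w)‖ ^ 2 ≤ 1) ↔
      x₁ * x₂ * (x₁ + x₂ - 2) + x₁ + x₂ ≤ 0 := by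
  have ha : (1 : ℝ) - x₁ ≠ 0 := sub_ne_zero.mpr (Ne.symm hx₁)
  have hb : (1 : ℝ) - x₂ ≠ 0 := sub_ne_zero.mpr (Ne.symm hx₂)
  have hDpos : 0 < (1 - x₁) ^ 2 * (1 - x₂) ^ 2 := by positivity
  have key : ∀ w : ℂ, ‖w‖ = 1 →
      ‖P w‖ ^ 2 + ‖P (-w)‖ ^ 2
        = 1 + 2 * (x₁ * x₂ * (x₁ + x₂ - 2) + x₁ + x₂) * (w.im) ^ 2
          / ((1 - x₁) ^ 2 * (1 - x₂) ^ 2) := by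
    intro w hw
    rw [hP w, hP (-w)]
    have := key_id x₁ x₂ hx₁ hx₂ w hw
    exact this
  constructor
  · intro h
    have hI := h Complex.I (by simp)
    rw [key Complex.I (by simp)] at hI
    simp only [Complex.I_im, one_pow] at hI
    have h2 : 2 * (x₁ * x₂ * (x₁ + x₂ - 2) + x₁ + x₂) * 1
        / ((1 - x₁) ^ 2 * (1 - x₂) ^ 2) ≤ 0 := by linarith
    rw [div_nonpos_iff] at h2
    rcases h2 with ⟨h3, _⟩ | ⟨h3, h4⟩
    · nlinarith [hDpos]
    · linarith
  · intro hS w hw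
    rw [key w hw]
    have : 2 * (x₁ * x₂ * (x₁ + x₂ - 2) + x₁ + x₂) * w.im ^ 2
        / ((1 - x₁) ^ 2 * (1 - x₂) ^ 2) ≤ 0 := by
      apply div_nonpos_of_nonpos_of_nonneg
      · nlinarith [sq_nonneg w.im]
      · positivity
    linarith
end

section
/- Let a₁,…,aₙ be real numbers, let σₖ denote the k-th elementary symmetric polynomial of a₁,…,aₙ (with σ₀ = 1), and let k be an integer with 0 ≤ 2k ≤ n. Then Σ_{S ⊆ {1,…,n}, |S| = 2k} ∏_{j ∈ S}(1 − aⱼ) · ∏_{j ∉ S} aⱼ = Σ_{l=0}^{2k} (−1)^l · C(n−l, 2k−l) · σ_{n−l}. -/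
open Finset

theorem stmt_10 (n : ℕ) (a : Fin n → ℝ)
    (σ : ℕ → ℝ)
    (hσ : ∀ k, σ k = ∑ S ∈ Finset.powersetCard k (Finset.univ : Finset (Fin n)),
      ∏ i ∈ S, a i)
    (k : ℕ) (hk : 2 * k ≤ n) :
    (∑ S ∈ Finset.powersetCard (2 * k) (Finset.univ : Finset (Fin n)),
        (∏ j ∈ S, (1 - a j)) * ∏ j ∈ Finset.univ \ S, a j)
      = ∑ l ∈ Finset.range (2 * k + 1),
          (-1 : ℝ) ^ l * ((n - l).choose (2 * k - l) : ℝ) * σ (n - l) := by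
  have lhs_eq : (∑ S ∈ Finset.powersetCard (2 * k) (Finset.univ : Finset (Fin n)),
        (∏ j ∈ S, (1 - a j)) * ∏ j ∈ Finset.univ \ S, a j)
      = ∑ p ∈ (Finset.powersetCard (2 * k) (Finset.univ : Finset (Fin n))).sigma
            (fun S => S.powerset),
          (-1 : ℝ) ^ p.2.card * ∏ j ∈ p.2 ∪ (Finset.univ \ p.1), a j := by
    rw [Finset.sum_sigma]
    apply Finset.sum_congr rfl
    intro S _
    have h1 : ∏ j ∈ S, (1 - a j)
        = ∑ T ∈ S.powerset, (-1 : ℝ) ^ T.card * ∏ j ∈ T, a j := by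
      have h2 := Finset.prod_add (fun i => -a i) (fun _ => (1:ℝ)) S
      simp only [Finset.prod_const_one, mul_one] at h2
      calc ∏ j ∈ S, (1 - a j) = ∏ j ∈ S, (-a j + 1) := by
            apply Finset.prod_congr rfl; intros; ring
        _ = ∑ T ∈ S.powerset, ∏ j ∈ T, -a j := h2
        _ = ∑ T ∈ S.powerset, (-1 : ℝ) ^ T.card * ∏ j ∈ T, a j := by
            apply Finset.sum_congr rfl; intro T _
            calc ∏ j ∈ T, -a j = ∏ j ∈ T, ((-1) * a j) := by
                  apply Finset.prod_congr rfl; intros; ring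
              _ = (-1 : ℝ) ^ T.card * ∏ j ∈ T, a j := by
                  rw [Finset.prod_mul_distrib, Finset.prod_const]
    rw [h1, Finset.sum_mul]
    apply Finset.sum_congr rfl
    intro T hT
    rw [Finset.mem_powerset] at hT
    have hdisj : Disjoint T (Finset.univ \ S) :=
      disjoint_sdiff_self_right.mono_left hT
    rw [mul_assoc, ← Finset.prod_union hdisj]
  have rhs_eq : (∑ l ∈ Finset.range (2 * k + 1),
          (-1 : ℝ) ^ l * ((n - l).choose (2 * k - l) : ℝ) * σ (n - l))
      = ∑ p ∈ (Finset.range (2 * k + 1)).sigma (fun l =>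
            (Finset.powersetCard (n - l) (Finset.univ : Finset (Fin n))).sigma
              (fun W => Finset.powersetCard (2 * k - l) W)),
          (-1 : ℝ) ^ p.1 * ∏ j ∈ p.2.1, a j := by
    rw [Finset.sum_sigma]
    apply Finset.sum_congr rfl
    intro l _
    rw [Finset.sum_sigma, hσ, Finset.mul_sum]
    apply Finset.sum_congr rfl
    intro W hW
    rw [Finset.mem_powersetCard] at hW
    dsimp only
    rw [Finset.sum_const, nsmul_eq_mul, Finset.card_powersetCard, hW.2]
    ring
  rw [lhs_eq, rhs_eq]
  apply Finset.sum_nbij'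
    (fun p => ⟨2 * k - p.2.card, ⟨p.2 ∪ (Finset.univ \ p.1), p.2⟩⟩)
    (fun q => ⟨(Finset.univ \ q.2.1) ∪ q.2.2, q.2.2⟩)
  · -- maps into
    rintro ⟨S, T⟩ hp
    rw [Finset.mem_sigma, Finset.mem_powersetCard, Finset.mem_powerset] at hp
    obtain ⟨⟨_, hScard⟩, hTS⟩ := hp
    have hTcard : T.card ≤ 2 * k := hScard ▸ Finset.card_le_card hTS
    have hdisj : Disjoint T (Finset.univ \ S) :=
      disjoint_sdiff_self_right.mono_left hTS
    simp only [Finset.mem_sigma, Finset.mem_range, Finset.mem_powersetCard]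
    refine ⟨by omega, ⟨Finset.subset_univ _, ?_⟩, Finset.subset_union_left, ?_⟩
    · rw [Finset.card_union_of_disjoint hdisj, Finset.card_sdiff_of_subset (Finset.subset_univ S),
        Finset.card_univ, Fintype.card_fin, hScard]
      omega
    · omega
  · -- maps back into
    rintro ⟨l, W, T⟩ hq
    simp only [Finset.mem_sigma, Finset.mem_range, Finset.mem_powersetCard] at hq
    obtain ⟨hl, ⟨_, hWcard⟩, hTW, hTcard⟩ := hq
    have hdisj : Disjoint (Finset.univ \ W) T :=
      disjoint_sdiff_self_left.mono_right hTW
    simp only [Finset.mem_sigma, Finset.mem_powersetCard, Finset.mem_powerset]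
    refine ⟨⟨Finset.subset_univ _, ?_⟩, Finset.subset_union_right⟩
    rw [Finset.card_union_of_disjoint hdisj, Finset.card_sdiff_of_subset (Finset.subset_univ W),
      Finset.card_univ, Fintype.card_fin, hWcard, hTcard]
    omega
  · -- left inverse
    rintro ⟨S, T⟩ hp
    rw [Finset.mem_sigma, Finset.mem_powersetCard, Finset.mem_powerset] at hp
    obtain ⟨⟨_, _⟩, hTS⟩ := hp
    have hSeq : (Finset.univ \ (T ∪ (Finset.univ \ S))) ∪ T = S := by
      ext x
      simp only [Finset.mem_union, Finset.mem_sdiff, Finset.mem_univ, true_and]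
      by_cases hxT : x ∈ T
      · simp [hxT, hTS hxT]
      · simp [hxT]
    dsimp only
    rw [hSeq]
  · -- right inverse
    rintro ⟨l, W, T⟩ hq
    simp only [Finset.mem_sigma, Finset.mem_range, Finset.mem_powersetCard] at hq
    obtain ⟨hl, ⟨_, hWcard⟩, hTW, hTcard⟩ := hq
    have hWeq : T ∪ (Finset.univ \ ((Finset.univ \ W) ∪ T)) = W := by
      ext x
      simp only [Finset.mem_union, Finset.mem_sdiff, Finset.mem_univ, true_and]
      by_cases hxT : x ∈ T
      · simp [hxT, hTW hxT]
      · simp [hxT]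
    have hlcalc : 2 * k - T.card = l := by omega
    dsimp only
    rw [hlcalc, hWeq]
  · -- term equality
    rintro ⟨S, T⟩ hp
    rw [Finset.mem_sigma, Finset.mem_powersetCard, Finset.mem_powerset] at hp
    obtain ⟨⟨_, hScard⟩, hTS⟩ := hp
    have hTcard : T.card ≤ 2 * k := hScard ▸ Finset.card_le_card hTS
    have h : (-1 : ℝ) ^ (2 * k - T.card) * (-1 : ℝ) ^ T.card = (-1 : ℝ) ^ (2 * k) := by
      rw [← pow_add]; congr 1; omega
    have h2 : ((-1 : ℝ)) ^ (2 * k) = 1 := by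
      rw [pow_mul]; norm_num
    have h3 : ((-1 : ℝ)) ^ T.card * (-1 : ℝ) ^ T.card = 1 := by
      rw [← pow_add, ← two_mul, pow_mul]; norm_num
    have hsign : ((-1 : ℝ)) ^ (2 * k - T.card) = (-1 : ℝ) ^ T.card := by
      calc (-1:ℝ) ^ (2*k - T.card)
          = (-1:ℝ) ^ (2*k - T.card) * ((-1:ℝ) ^ T.card * (-1:ℝ) ^ T.card) := by
            rw [h3, mul_one]
        _ = ((-1:ℝ) ^ (2*k - T.card) * (-1:ℝ) ^ T.card) * (-1:ℝ) ^ T.card := by ring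
        _ = (-1:ℝ) ^ T.card := by rw [h, h2, one_mul]
    dsimp only
    rw [hsign]
end
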